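/- Let G be a finite group, H ⊴ G with G/H cyclic, and g ∈ G with centralizing subgroup H·C_G(g) = K_c. Then for any subgroup K with H ≤ K ≤ G, the G-conjugacy class of g splits into exactly [G : K·K_c] conjugacy classes under the conjugation action of K. -/
import Mathlib
open scoped Pointwise

/-- Let `H ⊴ G` with `G/H` cyclic, `g ∈ G` with centralizing subgroup
`K_c = H·C_G(g)`. For any subgroup `K` with `H ≤ K ≤ G`, the `G`-conjugacy class of
`g` splits into exactly `[G : K·K_c]` classes under conjugation by `K`. -/
theorem stmt19 {G : Type*} [Group G] [Finite G] (H : Subgroup G) [H.Normal]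
    (hcyc : IsCyclic (G ⧸ H)) (g : G) (Kc : Subgroup G)
    (hKc : H ⊔ Subgroup.centralizer {g} = Kc)
    (K : Subgroup G) (hHK : H ≤ K) :
    Nat.card {S : Set G //
        ∃ x ∈ conjugatesOf g, S = (fun k : G => k * x * k⁻¹) '' (K : Set G)} =
      (K ⊔ Kc).index := by
  classical
  letI : CommGroup (G ⧸ H) := hcyc.commGroup
  have hKnorm : K.Normal := by
    constructor
    intro n hn x
    have hcomm : x * n * x⁻¹ * n⁻¹ ∈ H := by
      rw [← QuotientGroup.eq_one_iff]
      have : ((x : G ⧸ H) * n) = (n : G ⧸ H) * x := mul_comm _ _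
      simp only [QuotientGroup.mk_mul, QuotientGroup.mk_inv]
      rw [this]
      group
    have hx : x * n * x⁻¹ = (x * n * x⁻¹ * n⁻¹) * n := by group
    rw [hx]
    exact K.mul_mem (hHK hcomm) hn
  set C := Subgroup.centralizer ({g} : Set G) with hC
  set N := K ⊔ C with hN
  have hsup : K ⊔ Kc = N := by
    rw [← hKc, hN, ← sup_assoc, sup_of_le_left hHK]
  rw [hsup]
  set φ : G → Set G := fun a => (fun k : G => k * (a * g * a⁻¹) * k⁻¹) '' (K : Set G) with hφ
  have key : ∀ a b : G, φ a = φ b ↔ a⁻¹ * b ∈ N := by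
    intro a b
    constructor
    · intro hab
      have hb : b * g * b⁻¹ ∈ φ b := ⟨1, K.one_mem, by group⟩
      rw [← hab] at hb
      obtain ⟨k, hk, hkeq0⟩ := hb
      have hkeq : k * (a * g * a⁻¹) * k⁻¹ = b * g * b⁻¹ := hkeq0
      have hc : b⁻¹ * k * a ∈ C := by
        rw [hC, Subgroup.mem_centralizer_singleton_iff]
        have h1 : b⁻¹ * (k * (a * g * a⁻¹) * k⁻¹) * b = g := by rw [hkeq]; group
        calc b⁻¹ * k * a * g = (b⁻¹ * (k * (a * g * a⁻¹) * k⁻¹) * b) * (b⁻¹ * k * a) := by group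
          _ = g * (b⁻¹ * k * a) := by rw [h1]
      have hk'' : b⁻¹ * k * b ∈ K := by
        have := hKnorm.conj_mem k hk b⁻¹
        simpa [mul_assoc] using this
      have heq : a⁻¹ * b = (b⁻¹ * k * a)⁻¹ * (b⁻¹ * k * b) := by group
      rw [heq]
      exact N.mul_mem (N.inv_mem (Subgroup.mem_sup_right hc)) (Subgroup.mem_sup_left hk'')
    · intro hab
      have : a⁻¹ * b ∈ (K : Set G) * (C : Set G) := by
        rw [← Subgroup.normal_mul K C]; exact hab
      obtain ⟨k, hk, c, hc, hkc⟩ := this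
      have hkc' : k * c = a⁻¹ * b := hkc
      have hcg : c * g = g * c :=
        Subgroup.mem_centralizer_singleton_iff.mp hc
      have hb : b = a * (k * c) := by rw [hkc']; group
      have hbg : b * g * b⁻¹ = (a * k * a⁻¹) * (a * g * a⁻¹) * (a * k * a⁻¹)⁻¹ := by
        rw [hb]
        have h2 : k * (c * g) * c⁻¹ * k⁻¹ = k * g * k⁻¹ := by rw [hcg]; group
        calc a * (k * c) * g * (a * (k * c))⁻¹ = a * (k * (c * g) * c⁻¹ * k⁻¹) * a⁻¹ := by group
          _ = a * (k * g * k⁻¹) * a⁻¹ := by rw [h2]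
          _ = (a * k * a⁻¹) * (a * g * a⁻¹) * (a * k * a⁻¹)⁻¹ := by group
      have hk' : a * k * a⁻¹ ∈ K := hKnorm.conj_mem k hk a
      -- show φ a = φ b
      ext y
      constructor
      · rintro ⟨m, hm, rfl⟩
        refine ⟨m * (a * k * a⁻¹)⁻¹, K.mul_mem hm (K.inv_mem hk'), ?_⟩
        rw [hbg]; group
      · rintro ⟨m, hm, rfl⟩
        refine ⟨m * (a * k * a⁻¹), K.mul_mem hm hk', ?_⟩
        rw [hbg]; group
  have hmem : ∀ a : G, ∃ x ∈ conjugatesOf g, φ a = (fun k : G => k * x * k⁻¹) '' (K : Set G) :=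
    fun a => ⟨a * g * a⁻¹, isConj_iff.mpr ⟨a, rfl⟩, rfl⟩
  let f : G ⧸ N → {S : Set G //
      ∃ x ∈ conjugatesOf g, S = (fun k : G => k * x * k⁻¹) '' (K : Set G)} :=
    Quotient.lift (fun a => ⟨φ a, hmem a⟩)
      (fun a b h => Subtype.ext ((key a b).mpr (QuotientGroup.leftRel_apply.mp h)))
  have hbij : Function.Bijective f := by
    constructor
    · intro x y
      refine Quotient.inductionOn₂ x y (fun a b h => ?_)
      have h2 : φ a = φ b := congrArg Subtype.val h
      exact Quotient.sound (QuotientGroup.leftRel_apply.mpr ((key a b).mp h2))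
    · rintro ⟨S, x, hx, hS⟩
      obtain ⟨a, ha⟩ := isConj_iff.mp hx
      refine ⟨QuotientGroup.mk a, Subtype.ext ?_⟩
      show φ a = S
      rw [hS, ← ha]
  calc Nat.card {S : Set G //
      ∃ x ∈ conjugatesOf g, S = (fun k : G => k * x * k⁻¹) '' (K : Set G)}
      = Nat.card (G ⧸ N) := (Nat.card_eq_of_bijective f hbij).symm
    _ = N.index := rfl
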